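/- Suppose θ : Y → X is a stability map. Then for every layer point (s,C) of Γ_k(X) one has θ_*(i_*(s,C)) ≤ σ_*(s,C) in Γ_k(X). -/

import Mathlib

variable {Z : Type*} [MetricSpace Z]

/-- Vertex set `V_{s,k}(X)` of the degree-Rips complex: points of `X` having at
least `k` other points of `X` within distance `s`. -/
def drVertex (X : Set Z) (k : ℕ) (s : ℝ) : Set Z :=
  {x ∈ X | k ≤ {y ∈ X | y ≠ x ∧ dist x y ≤ s}.ncard}

/-- The generating relation for components: two vertices at distance at most `s`. -/
def drStep (X : Set Z) (k : ℕ) (s : ℝ) (x y : Z) : Prop :=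
  x ∈ drVertex X k s ∧ y ∈ drVertex X k s ∧ dist x y ≤ s

/-- `C` is a degree-Rips component (an element of `π₀ L_{s,k}(X)`): the class of
some vertex `x` under the equivalence relation generated by `drStep`. -/
def drComp (X : Set Z) (k : ℕ) (s : ℝ) (C : Set Z) : Prop :=
  ∃ x ∈ drVertex X k s, C = {y | Relation.ReflTransGen (drStep X k s) x y}

/-- `(t, C)` is a layer point of `Γ_k(X)`: it is an element of the hierarchy, and
every element `(s, D) ≤ (t, C)` with `s < t` has `D` a proper subset of `C`. -/
def IsLayer (X : Set Z) (k : ℕ) (t : ℝ) (C : Set Z) : Prop :=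
  0 ≤ t ∧ drComp X k t C ∧
    ∀ s D, 0 ≤ s → drComp X k s D → s < t → D ⊆ C → D ⊂ C

/-- `(t, C)` is a branch point of `Γ_k(X)`. -/
def IsBranch (X : Set Z) (k : ℕ) (t : ℝ) (C : Set Z) : Prop :=
  0 ≤ t ∧ drComp X k t C ∧
    ((∀ s D, 0 ≤ s → drComp X k s D → s < t → ¬D ⊆ C) ∨
      ∃ s₀, s₀ < t ∧ ∀ s, s₀ ≤ s → s < t →
        ∃ D₁ D₂, drComp X k s D₁ ∧ drComp X k s D₂ ∧ D₁ ≠ D₂ ∧ D₁ ⊆ C ∧ D₂ ⊆ C)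

/-- `(t, D)` is the maximal layer point below the element `(u, C)` of `Γ_k(X)`:
it is a layer point, `(t, D) ≤ (u, C)`, and every layer point below `(u, C)`
is below `(t, D)`. -/
def IsMaxLayerBelow (X : Set Z) (k : ℕ) (u : ℝ) (C : Set Z) (t : ℝ) (D : Set Z) : Prop :=
  IsLayer X k t D ∧ t ≤ u ∧ D ⊆ C ∧
    ∀ t' D', IsLayer X k t' D' → t' ≤ u → D' ⊆ C → t' ≤ t ∧ D' ⊆ D

/-- `t` is a layer parameter of `X`. -/
def IsLayerParam (X : Set Z) (k : ℕ) (t : ℝ) : Prop :=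
  ∃ C, IsLayer X k t C

/-- A stability map `θ : Y → X` (encoded as a map `Z → Z` carrying `Y` into `X`). -/
def IsStabilityMap (X Y : Set Z) (k : ℕ) (r : ℝ) (θ : Z → Z) : Prop :=
  (∀ y ∈ Y, θ y ∈ X) ∧
    ∀ s : ℝ, 0 ≤ s →
      (∀ y₁ y₂, y₁ ∈ drVertex Y k s → y₂ ∈ drVertex Y k s → dist y₁ y₂ ≤ s →
          θ y₁ ∈ drVertex X k (s + 2 * r) ∧ θ y₂ ∈ drVertex X k (s + 2 * r) ∧
          dist (θ y₁) (θ y₂) ≤ s + 2 * r) ∧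
      (∀ x ∈ drVertex X k s, ∃ C, drComp X k (s + 2 * r) C ∧ x ∈ C ∧ θ x ∈ C) ∧
      (∀ y ∈ drVertex Y k s, ∃ D, drComp Y k (s + 2 * r) D ∧ y ∈ D ∧ θ y ∈ D)

/-- Vertices of the degree-Rips complex at scale infinity: points with at least
`k` other points. -/
def drVertexInf (W : Set Z) (k : ℕ) : Set Z :=
  {w ∈ W | k ≤ {w' ∈ W | w' ≠ w}.ncard}

/-- Phase change numbers: distances between distinct vertices at scale infinity. -/
def IsPhaseChange (W : Set Z) (k : ℕ) (t : ℝ) : Prop :=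
  ∃ w₁ ∈ drVertexInf W k, ∃ w₂ ∈ drVertexInf W k, w₁ ≠ w₂ ∧ t = dist w₁ w₂

/-- for a stability map `θ : Y → X` and every layer point `(s, C)`
of `Γ_k(X)`, one has `θ_* (i_* (s, C)) ≤ σ_* (s, C)` in `Γ_k(X)`.
Here `i(C) = D` is the component of `Γ_k(Y)` at scale `s` containing `C`,
`i_*(s, C) = (s₁, C₁)` is the maximal layer point of `Γ_k(Y)` below `(s, D)`,
`θ_*(s₁, C₁) = (s₂, C₂)` is the maximal layer point of `Γ_k(X)` below
`(s₁ + 2r, E)` where `E` is the component containing `θ(C₁)`, and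
`σ_*(s, C) = (v, F)` is the maximal layer point of `Γ_k(X)` below
`(s + 2r, C')` where `C'` is the component at scale `s + 2r` containing `C`. -/

lemma drVertex_mono (W : Set Z) (hW : W.Finite) (k : ℕ) {a b : ℝ} (hab : a ≤ b) :
    drVertex W k a ⊆ drVertex W k b := by
  rintro x ⟨hxW, hk⟩
  refine ⟨hxW, hk.trans (Set.ncard_le_ncard ?_ (hW.subset (fun y hy => hy.1)))⟩
  exact fun y hy => ⟨hy.1, hy.2.1, hy.2.2.trans hab⟩

lemma drStep_symm {W : Set Z} {k : ℕ} {s : ℝ} {x y : Z} (h : drStep W k s x y) :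
    drStep W k s y x :=
  ⟨h.2.1, h.1, (dist_comm y x) ▸ h.2.2⟩

lemma drStep_mono {W : Set Z} (hW : W.Finite) {k : ℕ} {a b : ℝ} (hab : a ≤ b) {x y : Z}
    (h : drStep W k a x y) : drStep W k b x y :=
  ⟨drVertex_mono W hW k hab h.1, drVertex_mono W hW k hab h.2.1, h.2.2.trans hab⟩

lemma drComp_subset {W : Set Z} (hW : W.Finite) {k : ℕ} {a b : ℝ} {E C : Set Z}
    (ha : drComp W k a E) (hb : drComp W k b C) (hab : a ≤ b)
    {z : Z} (hzE : z ∈ E) (hzC : z ∈ C) : E ⊆ C := by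
  obtain ⟨x, hx, rfl⟩ := ha
  obtain ⟨x', hx', rfl⟩ := hb
  intro y hy
  have mono : ∀ {u v : Z}, Relation.ReflTransGen (drStep W k a) u v →
      Relation.ReflTransGen (drStep W k b) u v :=
    fun h => Relation.ReflTransGen.mono (fun _ _ h' => drStep_mono hW hab h') _ _ h
  have hsymm : Symmetric (Relation.ReflTransGen (drStep W k b)) :=
    by
      haveI : Std.Symm (drStep W k b) := ⟨fun _ _ h => drStep_symm h⟩
      exact fun _ _ h => Std.Symm.symm _ _ h
  exact Relation.ReflTransGen.trans hzC
    (Relation.ReflTransGen.trans (hsymm (mono hzE)) (mono hy))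

lemma exists_layer_below {W : Set Z} (hW : W.Finite) {k : ℕ} {s : ℝ} {D : Set Z}
    (hs : 0 ≤ s) (hD : drComp W k s D) :
    ∃ t₀, IsLayer W k t₀ D ∧ t₀ ≤ s := by
  set T : Set ℝ := {t | 0 ≤ t ∧ t ≤ s ∧ drComp W k t D} with hT
  have hTne : T.Nonempty := ⟨s, hs, le_rfl, hD⟩
  have hTbdd : BddBelow T := ⟨0, fun t ht => ht.1⟩
  set t₀ := sInf T with ht₀def
  have ht₀mem_le : ∀ t ∈ T, t₀ ≤ t := fun t ht => csInf_le hTbdd ht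
  have ht₀0 : 0 ≤ t₀ := le_csInf hTne (fun t ht => ht.1)
  have ht₀s : t₀ ≤ s := ht₀mem_le s ⟨hs, le_rfl, hD⟩
  set A : Set ℝ := {d | ∃ x ∈ W, ∃ y ∈ W, d = dist x y} with hA
  have hAfin : A.Finite := by
    have hsub : A ⊆ (fun p : Z × Z => dist p.1 p.2) '' (W ×ˢ W) := by
      rintro d ⟨x, hx, y, hy, rfl⟩
      exact ⟨(x, y), ⟨hx, hy⟩, rfl⟩
    exact ((hW.prod hW).image _).subset hsub
  obtain ⟨ε, hε, hgap⟩ : ∃ ε > 0, ∀ a ∈ A, ¬(t₀ < a ∧ a < t₀ + ε) := by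
    by_cases hB : (A ∩ Set.Ioi t₀).Nonempty
    · obtain ⟨m, hm, hmin⟩ := Set.exists_min_image _ id (hAfin.inter_of_left _) hB
      refine ⟨m - t₀, by simpa using hm.2, ?_⟩
      rintro a ha ⟨h1, h2⟩
      have := hmin a ⟨ha, h1⟩
      simp only [id] at this
      linarith
    · exact ⟨1, one_pos, fun a ha h => hB ⟨a, ha, h.1⟩⟩
  obtain ⟨t, htT, htlt⟩ : ∃ t ∈ T, t < t₀ + ε := Real.lt_sInf_add_pos hTne hε
  have hdist : ∀ x ∈ W, ∀ y ∈ W, (dist x y ≤ t ↔ dist x y ≤ t₀) := by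
    intro x hx y hy
    constructor
    · intro h
      by_contra hlt
      push_neg at hlt
      exact hgap _ ⟨x, hx, y, hy, rfl⟩ ⟨hlt, lt_of_le_of_lt h htlt⟩
    · intro h; exact h.trans (ht₀mem_le t htT)
  have hV : drVertex W k t = drVertex W k t₀ := by
    ext x
    simp only [drVertex, Set.mem_setOf_eq]
    refine and_congr_right fun hxW => ?_
    have : {y ∈ W | y ≠ x ∧ dist x y ≤ t} = {y ∈ W | y ≠ x ∧ dist x y ≤ t₀} := by
      ext y
      simp only [Set.mem_setOf_eq]
      exact and_congr_right fun hyW => and_congr_right fun _ => hdist x hxW y hyW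
    rw [this]
  have hS : drStep W k t = drStep W k t₀ := by
    funext x y
    rw [eq_iff_iff]
    constructor <;> rintro ⟨h1, h2, h3⟩
    · exact ⟨(Set.ext_iff.mp hV x).mp h1, (Set.ext_iff.mp hV y).mp h2,
        (hdist x h1.1 y h2.1).mp h3⟩
    · exact ⟨(Set.ext_iff.mp hV x).mpr h1, (Set.ext_iff.mp hV y).mpr h2,
        (hdist x h1.1 y h2.1).mpr h3⟩
  have hcompt₀ : drComp W k t₀ D := by
    obtain ⟨x, hx, hDeq⟩ := htT.2.2
    refine ⟨x, (Set.ext_iff.mp hV x).mp hx, ?_⟩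
    rw [hDeq, hS]
  refine ⟨t₀, ⟨ht₀0, hcompt₀, ?_⟩, ht₀s⟩
  intro s' D' hs' hD' hlt hsub
  refine (Set.ssubset_iff_subset_ne).mpr ⟨hsub, ?_⟩
  intro heq
  exact absurd (ht₀mem_le s' ⟨hs', hlt.le.trans ht₀s, heq ▸ hD'⟩) (not_le.mpr hlt)

theorem theta_star_i_star_le_sigma_star (X Y : Set Z)
    (hXfin : X.Finite) (hYfin : Y.Finite) (hXY : X ⊆ Y)
    (k : ℕ) (r : ℝ) (hr : 0 < r) (θ : Z → Z) (hθ : IsStabilityMap X Y k r θ)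
    (s : ℝ) (C : Set Z) (hC : IsLayer X k s C)
    (D : Set Z) (hD : drComp Y k s D) (hCD : C ⊆ D)
    (s₁ : ℝ) (C₁ : Set Z) (h₁ : IsMaxLayerBelow Y k s D s₁ C₁)
    (E : Set Z) (hE : drComp X k (s₁ + 2 * r) E) (hθC₁ : θ '' C₁ ⊆ E)
    (s₂ : ℝ) (C₂ : Set Z) (h₂ : IsMaxLayerBelow X k (s₁ + 2 * r) E s₂ C₂)
    (C' : Set Z) (hC' : drComp X k (s + 2 * r) C') (hCC' : C ⊆ C')
    (v : ℝ) (F : Set Z) (h₃ : IsMaxLayerBelow X k (s + 2 * r) C' v F) :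
    s₂ ≤ v ∧ C₂ ⊆ F := by
  obtain ⟨hθX, hθs⟩ := hθ
  have hs0 : 0 ≤ s := hC.1
  -- C₁ = D as sets: D ⊆ C₁ via the minimal-scale layer point below (s, D)
  obtain ⟨t₀, hlay, ht₀s⟩ := exists_layer_below hYfin hs0 hD
  obtain ⟨hlay₁, hs₁s, hC₁D, hmax₁⟩ := h₁
  obtain ⟨-, hDC₁⟩ := hmax₁ t₀ D hlay ht₀s subset_rfl
  -- base vertex of C
  obtain ⟨-, hCcomp, -⟩ := hC
  obtain ⟨x₀, hx₀V, hCeq⟩ := hCcomp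
  have hx₀C : x₀ ∈ C := by rw [hCeq]; exact Relation.ReflTransGen.refl
  have hθx₀E : θ x₀ ∈ E := hθC₁ ⟨x₀, hDC₁ (hCD hx₀C), rfl⟩
  -- θ x₀ ∈ C'
  obtain ⟨-, hb, -⟩ := hθs s hs0
  obtain ⟨G, hGcomp, hx₀G, hθx₀G⟩ := hb x₀ hx₀V
  have hGC' : G ⊆ C' := drComp_subset hXfin hGcomp hC' le_rfl hx₀G (hCC' hx₀C)
  have hθx₀C' : θ x₀ ∈ C' := hGC' hθx₀G
  -- E ⊆ C'
  have hEC' : E ⊆ C' :=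
    drComp_subset hXfin hE hC' (by linarith) hθx₀E hθx₀C'
  obtain ⟨hlay₂, hs₂le, hC₂E, -⟩ := h₂
  exact h₃.2.2.2 s₂ C₂ hlay₂ (by linarith) (hC₂E.trans hEC')
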